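/- Let E and D be O-categories with E supporting canonical fixed points, and let F : D × E → E be locally continuous. Then there is a natural isomorphism Unfold : F† ⇒ F ∘ ⟨id_D, F†⟩ with inverse Fold, whose component at an object D₀ of D is the isomorphism unfold : FIX(F_{D₀}) ≅ F(D₀, FIX(F_{D₀})) = F_{D₀}(FIX(F_{D₀})) coming from the canonical fixed point of the endofunctor F_{D₀} = F(D₀, −). In particular F†(D₀) ≅ F(D₀, F†(D₀)) naturally in D₀. -/

import Mathlib

open CategoryTheory OmegaCompletePartialOrder

universe v u

class OHom (K : Type u) [Category.{v} K] where
  homOrder : ∀ X Y : K, OmegaCompletePartialOrder (X ⟶ Y)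

attribute [instance] OHom.homOrder

/-- An O-category: a category enriched in dcpos with continuous composition. -/
class OCat (K : Type u) [Category.{v} K] extends OHom K where
  comp_mono : ∀ {X Y Z : K} {f f' : X ⟶ Y} {g g' : Y ⟶ Z},
    f ≤ f' → g ≤ g' → f ≫ g ≤ f' ≫ g'
  comp_cont_left : ∀ {X Y Z : K} (g : Y ⟶ Z) (c : Chain (X ⟶ Y))
    (hm : Monotone fun n => c n ≫ g),
    ωSup c ≫ g = ωSup ⟨fun n => c n ≫ g, hm⟩
  comp_cont_right : ∀ {X Y Z : K} (f : X ⟶ Y) (c : Chain (Y ⟶ Z))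
    (hm : Monotone fun n => f ≫ c n),
    f ≫ ωSup c = ωSup ⟨fun n => f ≫ c n, hm⟩

/-- An ω-chain of embeddings in an O-category. -/
structure ChainE (K : Type u) [Category.{v} K] [OCat K] where
  obj : ℕ → K
  e : ∀ n, obj n ⟶ obj (n + 1)
  p : ∀ n, obj (n + 1) ⟶ obj n
  ep₁ : ∀ n, e n ≫ p n = 𝟙 (obj n)
  ep₂ : ∀ n, p n ≫ e n ≤ 𝟙 (obj (n + 1))

/-- An O-colimit of an ω-chain of embeddings: a cocone of embeddings whose
leg/projection composites form an ascending chain with supremum the identity. -/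
structure OColim {K : Type u} [Category.{v} K] [OCat K] (Φ : ChainE K) where
  pt : K
  leg : ∀ n, Φ.obj n ⟶ pt
  legp : ∀ n, pt ⟶ Φ.obj n
  cocone : ∀ n, Φ.e n ≫ leg (n + 1) = leg n
  ep₁ : ∀ n, leg n ≫ legp n = 𝟙 (Φ.obj n)
  ep₂ : ∀ n, legp n ≫ leg n ≤ 𝟙 pt
  mono : Monotone fun n => legp n ≫ leg n
  sup : ωSup ⟨fun n => legp n ≫ leg n, mono⟩ = 𝟙 pt

/-- Iterated application of an endofunctor to an object: `pob F X n = Fⁿ X`. -/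
def pob {K : Type u} [Category.{v} K] (F : K ⥤ K) (X : K) : ℕ → K
  | 0 => X
  | n + 1 => F.obj (pob F X n)

/-- The links `Fⁿ k` of the ω-chain generated by a first link `k : X ⟶ F X`. -/
def plink {K : Type u} [Category.{v} K] (F : K ⥤ K) {X : K} (k : X ⟶ F.obj X) :
    ∀ n, pob F X n ⟶ pob F X (n + 1)
  | 0 => k
  | n + 1 => F.map (plink F k n)

section Curry
variable {D E : Type u} [Category.{v} D] [Category.{v} E]

/-- Partial application of a bifunctor: `cur F X = F(X, −)`. -/
def cur (F : D × E ⥤ E) (X : D) : E ⥤ E where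
  obj Y := F.obj (X, Y)
  map {Y Y'} g := F.map ((𝟙 X, g) : (X, Y) ⟶ (X, Y'))
  map_id Y := by
    show F.map (𝟙 X, 𝟙 Y) = 𝟙 (F.obj (X, Y))
    exact F.map_id (X, Y)
  map_comp {Y Y' Y''} g h := by
    show F.map ((𝟙 X, g ≫ h) : (X, Y) ⟶ (X, Y''))
        = F.map ((𝟙 X, g) : (X, Y) ⟶ (X, Y')) ≫ F.map ((𝟙 X, h) : (X, Y') ⟶ (X, Y''))
    rw [← F.map_comp]
    congr 1
    exact congrArg (fun t => ((t, g ≫ h) : (X, Y) ⟶ (X, Y''))) (Category.id_comp (𝟙 X)).symm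

/-- The chain map `Ω(Λ F f)ₙ : (F_{C₀})ⁿ ⊥ ⟶ (F_{D₀})ⁿ ⊥` induced by f : C₀ ⟶ D₀. -/
def chmap (F : D × E ⥤ E) (bot : E) {C₀ D₀ : D} (f : C₀ ⟶ D₀) :
    ∀ n, pob (cur F C₀) bot n ⟶ pob (cur F D₀) bot n
  | 0 => 𝟙 bot
  | n + 1 =>
    F.map ((f, chmap F bot f n) :
      (C₀, pob (cur F C₀) bot n) ⟶ (D₀, pob (cur F D₀) bot n))

end Curry

section Helpers

lemma chain_shift_mono {α : Type*} [Preorder α] (c : Chain α) :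
    Monotone fun n => c (n + 1) := fun a b h => c.monotone (by omega)

lemma ωSup_shift {α : Type*} [OmegaCompletePartialOrder α] (c : Chain α) :
    ωSup c = ωSup ⟨fun n => c (n + 1), chain_shift_mono c⟩ := by
  apply le_antisymm
  · exact ωSup_le _ _ fun n =>
      le_trans (c.monotone (Nat.le_succ n)) (le_ωSup ⟨fun n => c (n + 1), chain_shift_mono c⟩ n)
  · exact ωSup_le _ _ fun n => le_ωSup c (n + 1)

lemma ωSup_const_from {α : Type*} [OmegaCompletePartialOrder α] (c : Chain α) (v : α) (n : ℕ)
    (h : ∀ m, n ≤ m → c m = v) : ωSup c = v := by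
  apply le_antisymm
  · exact ωSup_le _ _ fun m =>
      le_trans (c.monotone (le_max_left m n)) (le_of_eq (h _ (le_max_right m n)))
  · exact (h n le_rfl) ▸ le_ωSup c n

lemma chain_congr {α : Type*} [OmegaCompletePartialOrder α] {f g : ℕ → α}
    {hf : Monotone f} {hg : Monotone g} (h : ∀ n, f n = g n) :
    ωSup (⟨f, hf⟩ : Chain α) = ωSup ⟨g, hg⟩ := by
  have hfg : f = g := funext h
  subst hfg; rfl

variable {K : Type u} [Category.{v} K] [OCat K]

lemma ωSup_comp {X Y Z : K} (c : Chain (X ⟶ Y)) (d : Chain (Y ⟶ Z))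
    (hm : Monotone fun n => c n ≫ d n) :
    ωSup c ≫ ωSup d = ωSup ⟨fun n => c n ≫ d n, hm⟩ := by
  have h1 : Monotone fun n => c n ≫ ωSup d := fun a b h => OCat.comp_mono (c.monotone h) le_rfl
  rw [OCat.comp_cont_left (ωSup d) c h1]
  apply le_antisymm
  · apply ωSup_le
    intro n
    have h2 : Monotone fun m => c n ≫ d m := fun a b h => OCat.comp_mono le_rfl (d.monotone h)
    show c n ≫ ωSup d ≤ _
    rw [OCat.comp_cont_right (c n) d h2]
    apply ωSup_le
    intro m
    refine le_trans ?_ (le_ωSup ⟨fun k => c k ≫ d k, hm⟩ (max n m))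
    exact OCat.comp_mono (c.monotone (le_max_left n m)) (d.monotone (le_max_right n m))
  · apply ωSup_le
    intro n
    exact le_trans (OCat.comp_mono le_rfl (le_ωSup d n))
      (le_ωSup ⟨fun k => c k ≫ ωSup d, h1⟩ n)

end Helpers

/-- weak fixed-point identity: for F : D × E ⥤ E locally continuous
and E supporting canonical fixed points, the componentwise isomorphisms
unfold : F†(D₀) ≅ F(D₀, F†(D₀)) form a natural isomorphism
Unfold : F† ⇒ F ∘ ⟨id, F†⟩ (with inverse Fold): each component is an isomorphism,
and the family is natural in D₀. -/
theorem weak_fixed_point_identity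
    {D : Type u} {E : Type u} [Category.{v} D] [Category.{v} E] [OCat D] [OCat E]
    -- E supports canonical fixed points
    (bot : E) (ι : ∀ A : E, bot ⟶ A) (hinit : ∀ (A : E) (f : bot ⟶ A), f = ι A)
    (z : ∀ X Y : E, X ⟶ Y)
    (hz₁ : ∀ {X Y Z : E} (f : X ⟶ Y), f ≫ z Y Z = z X Z)
    (hz₂ : ∀ {X Y Z : E} (g : Y ⟶ Z), z X Y ≫ g = z X Z)
    (hstrict : ∀ {X Y : E} (f : X ⟶ Y), z X Y ≤ f)
    (hcocomplete : ∀ Φ : ChainE E, Nonempty (OColim Φ))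
    -- F locally continuous
    (F : D × E ⥤ E)
    (hFmono : ∀ {X X' : D} {Y Y' : E} {f f' : X ⟶ X'} {g g' : Y ⟶ Y'},
      f ≤ f' → g ≤ g' →
      F.map ((f, g) : (X, Y) ⟶ (X', Y')) ≤ F.map ((f', g') : (X, Y) ⟶ (X', Y')))
    (hFcont₂ : ∀ (X : D) {Y Y' : E} (c : Chain (Y ⟶ Y'))
      (hm : Monotone fun n => F.map ((𝟙 X, c n) : (X, Y) ⟶ (X, Y'))),
      F.map ((𝟙 X, ωSup c) : (X, Y) ⟶ (X, Y'))
        = ωSup ⟨fun n => F.map ((𝟙 X, c n) : (X, Y) ⟶ (X, Y')), hm⟩)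
    (hFcont₁ : ∀ {X X' : D} (Y : E) (c : Chain (X ⟶ X'))
      (hm : Monotone fun n => F.map ((c n, 𝟙 Y) : (X, Y) ⟶ (X', Y))),
      F.map ((ωSup c, 𝟙 Y) : (X, Y) ⟶ (X', Y))
        = ωSup ⟨fun n => F.map ((c n, 𝟙 Y) : (X, Y) ⟶ (X', Y)), hm⟩)
    -- the chosen O-colimits defining F† on objects: F†(D₀) = FIX (F(D₀,−))
    (A : D → E)
    (κ : ∀ (D₀ : D) (n : ℕ), pob (cur F D₀) bot n ⟶ A D₀)
    (κp : ∀ (D₀ : D) (n : ℕ), A D₀ ⟶ pob (cur F D₀) bot n)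
    (hcocone : ∀ (D₀ : D) (n : ℕ),
      plink (cur F D₀) (ι ((cur F D₀).obj bot)) n ≫ κ D₀ (n + 1) = κ D₀ n)
    (hκ₁ : ∀ D₀ n, κ D₀ n ≫ κp D₀ n = 𝟙 (pob (cur F D₀) bot n))
    (hκ₂ : ∀ D₀ n, κp D₀ n ≫ κ D₀ n ≤ 𝟙 (A D₀))
    (hκmono : ∀ D₀, Monotone fun n => κp D₀ n ≫ κ D₀ n)
    (hκsup : ∀ D₀, ωSup ⟨fun n => κp D₀ n ≫ κ D₀ n, hκmono D₀⟩ = 𝟙 (A D₀))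
    -- the action of F† on morphisms: the mediating morphism between the chains
    (dmap : ∀ {C₀ D₀ : D}, (C₀ ⟶ D₀) → (A C₀ ⟶ A D₀))
    (hdmap : ∀ {C₀ D₀ : D} (f : C₀ ⟶ D₀)
      (hm : Monotone fun n => κp C₀ n ≫ chmap F bot f n ≫ κ D₀ n),
      dmap f = ωSup ⟨fun n => κp C₀ n ≫ chmap F bot f n ≫ κ D₀ n, hm⟩) :
    -- each component unfold is an isomorphism with inverse fold …
    (∀ (D₀ : D)
       (hf : Monotone fun n => (cur F D₀).map (κp D₀ n) ≫ κ D₀ (n + 1))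
       (hu : Monotone fun n => κp D₀ (n + 1) ≫ (cur F D₀).map (κ D₀ n)),
      (ωSup ⟨fun n => (cur F D₀).map (κp D₀ n) ≫ κ D₀ (n + 1), hf⟩
          ≫ ωSup ⟨fun n => κp D₀ (n + 1) ≫ (cur F D₀).map (κ D₀ n), hu⟩
        = 𝟙 (F.obj (D₀, A D₀))) ∧
      (ωSup ⟨fun n => κp D₀ (n + 1) ≫ (cur F D₀).map (κ D₀ n), hu⟩
          ≫ ωSup ⟨fun n => (cur F D₀).map (κp D₀ n) ≫ κ D₀ (n + 1), hf⟩
        = 𝟙 (A D₀))) ∧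
    -- … and the family Unfold is natural: F(f, F†f) ∘ unfold_{C₀} = unfold_{D₀} ∘ F†f
    (∀ {C₀ D₀ : D} (f : C₀ ⟶ D₀)
       (huC : Monotone fun n => κp C₀ (n + 1) ≫ (cur F C₀).map (κ C₀ n))
       (huD : Monotone fun n => κp D₀ (n + 1) ≫ (cur F D₀).map (κ D₀ n)),
      dmap f ≫ ωSup ⟨fun n => κp D₀ (n + 1) ≫ (cur F D₀).map (κ D₀ n), huD⟩
        = ωSup ⟨fun n => κp C₀ (n + 1) ≫ (cur F C₀).map (κ C₀ n), huC⟩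
            ≫ F.map ((f, dmap f) : (C₀, A C₀) ⟶ (D₀, A D₀))) := by
  -- elementary facts
  have hplink : ∀ (D₀ : D) (n : ℕ),
      plink (cur F D₀) (ι ((cur F D₀).obj bot)) n = κ D₀ n ≫ κp D₀ (n + 1) := by
    intro D₀ n
    rw [← hcocone D₀ n, Category.assoc, hκ₁ D₀ (n + 1), Category.comp_id]
  constructor
  · -- fold and unfold mutually inverse
    intro D₀ hf hu
    constructor
    · -- fold ≫ unfold = 𝟙
      have hterm : ∀ n, ((cur F D₀).map (κp D₀ n) ≫ κ D₀ (n + 1))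
          ≫ (κp D₀ (n + 1) ≫ (cur F D₀).map (κ D₀ n))
          = (cur F D₀).map (κp D₀ n ≫ κ D₀ n) := by
        intro n
        erw [Category.assoc, ← Category.assoc (κ D₀ (n + 1)), hκ₁ D₀ (n + 1), Category.id_comp,
          ← Functor.map_comp]
      have hm' : Monotone fun n => (cur F D₀).map (κp D₀ n ≫ κ D₀ n) :=
        fun a b h => hFmono le_rfl (hκmono D₀ h)
      have hm : Monotone fun n => ((cur F D₀).map (κp D₀ n) ≫ κ D₀ (n + 1))
          ≫ (κp D₀ (n + 1) ≫ (cur F D₀).map (κ D₀ n)) := by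
        intro a b h
        simp only [hterm]
        exact hm' h
      refine (ωSup_comp _ _ hm).trans ?_
      refine (chain_congr (hg := hm') hterm).trans ?_
      have hc : (cur F D₀).map (ωSup ⟨fun n => κp D₀ n ≫ κ D₀ n, hκmono D₀⟩)
          = ωSup ⟨fun n => (cur F D₀).map (κp D₀ n ≫ κ D₀ n), hm'⟩ :=
        hFcont₂ D₀ ⟨fun n => κp D₀ n ≫ κ D₀ n, hκmono D₀⟩ hm'
      refine hc.symm.trans ?_
      rw [hκsup D₀]
      exact CategoryTheory.Functor.map_id _ _
    · -- unfold ≫ fold = 𝟙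
      have hterm : ∀ n, (κp D₀ (n + 1) ≫ (cur F D₀).map (κ D₀ n))
          ≫ ((cur F D₀).map (κp D₀ n) ≫ κ D₀ (n + 1))
          = κp D₀ (n + 1) ≫ κ D₀ (n + 1) := by
        intro n
        erw [Category.assoc, ← Category.assoc ((cur F D₀).map (κ D₀ n)), ← Functor.map_comp,
          hκ₁ D₀ n, CategoryTheory.Functor.map_id, Category.id_comp]
      have hm : Monotone fun n => (κp D₀ (n + 1) ≫ (cur F D₀).map (κ D₀ n))
          ≫ ((cur F D₀).map (κp D₀ n) ≫ κ D₀ (n + 1)) := by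
        intro a b h
        simp only [hterm]
        exact hκmono D₀ (by omega)
      refine (ωSup_comp _ _ hm).trans ?_
      refine (chain_congr
        (hg := chain_shift_mono ⟨fun n => κp D₀ n ≫ κ D₀ n, hκmono D₀⟩) hterm).trans ?_
      exact (ωSup_shift ⟨fun n => κp D₀ n ≫ κ D₀ n, hκmono D₀⟩).symm.trans (hκsup D₀)
  · -- naturality
    intro C₀ D₀ f huC huD
    -- naturality of chmap with respect to the links
    have hnat : ∀ n, chmap F bot f n ≫ plink (cur F D₀) (ι ((cur F D₀).obj bot)) n
        = plink (cur F C₀) (ι ((cur F C₀).obj bot)) n ≫ chmap F bot f (n + 1) := by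
      intro n
      induction n with
      | zero => exact (hinit _ _).trans (hinit _ _).symm
      | succ n ih =>
        show F.map ((f, chmap F bot f n) :
              (C₀, pob (cur F C₀) bot n) ⟶ (D₀, pob (cur F D₀) bot n))
            ≫ F.map ((𝟙 D₀, plink (cur F D₀) (ι ((cur F D₀).obj bot)) n) :
              (D₀, pob (cur F D₀) bot n) ⟶ (D₀, pob (cur F D₀) bot (n + 1)))
          = F.map ((𝟙 C₀, plink (cur F C₀) (ι ((cur F C₀).obj bot)) n) :
              (C₀, pob (cur F C₀) bot n) ⟶ (C₀, pob (cur F C₀) bot (n + 1)))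
            ≫ F.map ((f, chmap F bot f (n + 1)) :
              (C₀, pob (cur F C₀) bot (n + 1)) ⟶ (D₀, pob (cur F D₀) bot (n + 1)))
        rw [← F.map_comp, ← F.map_comp]
        congr 1
        simp only [prod_comp, Category.comp_id, Category.id_comp]
        rw [ih]
    -- a single step of the comparison: κp n ≫ link n ≤ κp (n+1)
    have hstep : ∀ n, κp C₀ n ≫ plink (cur F C₀) (ι ((cur F C₀).obj bot)) n ≤ κp C₀ (n + 1) := by
      intro n
      rw [hplink C₀ n, ← Category.assoc]
      calc (κp C₀ n ≫ κ C₀ n) ≫ κp C₀ (n + 1)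
          ≤ 𝟙 (A C₀) ≫ κp C₀ (n + 1) := OCat.comp_mono (hκ₂ C₀ n) le_rfl
        _ = κp C₀ (n + 1) := Category.id_comp _
    -- the chain defining dmap f is monotone
    have hmc : Monotone fun n => κp C₀ n ≫ chmap F bot f n ≫ κ D₀ n := by
      apply monotone_nat_of_le_succ
      intro n
      have e : κp C₀ n ≫ chmap F bot f n ≫ κ D₀ n
          = (κp C₀ n ≫ plink (cur F C₀) (ι ((cur F C₀).obj bot)) n)
              ≫ chmap F bot f (n + 1) ≫ κ D₀ (n + 1) := by
        rw [← hcocone D₀ n, ← Category.assoc (chmap F bot f n), hnat n]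
        simp only [Category.assoc]
      rw [e]
      exact OCat.comp_mono (hstep n) le_rfl
    -- the key identity : κ C₀ n ≫ dmap f = chmap n ≫ κ D₀ n
    have haux : ∀ k n, κ C₀ n ≫ (κp C₀ (n + k) ≫ chmap F bot f (n + k) ≫ κ D₀ (n + k))
        = chmap F bot f n ≫ κ D₀ n := by
      intro k
      induction k with
      | zero =>
        intro n
        simp only [Nat.add_zero]
        rw [← Category.assoc, hκ₁ C₀ n, Category.id_comp]
      | succ k ih =>
        intro n
        have hidx : n + (k + 1) = (n + 1) + k := by omega
        rw [hidx, ← hcocone C₀ n, Category.assoc, ih (n + 1), ← Category.assoc, ← hnat n,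
          Category.assoc, hcocone D₀ n]
    have hkey : ∀ n, κ C₀ n ≫ dmap f = chmap F bot f n ≫ κ D₀ n := by
      intro n
      rw [hdmap f hmc]
      have hm2 : Monotone fun m => κ C₀ n ≫ (κp C₀ m ≫ chmap F bot f m ≫ κ D₀ m) :=
        fun a b h => OCat.comp_mono le_rfl (hmc h)
      rw [OCat.comp_cont_right (κ C₀ n) ⟨fun m => κp C₀ m ≫ chmap F bot f m ≫ κ D₀ m, hmc⟩ hm2]
      apply ωSup_const_from _ _ n
      intro m hnm
      obtain ⟨k, rfl⟩ := Nat.exists_eq_add_of_le hnm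
      exact haux k n
    -- the common chain t
    have hb : ∀ n, (κp C₀ (n + 1) ≫ (cur F C₀).map (κ C₀ n)) ≫ F.map ((f, dmap f) : _ ⟶ (D₀, _))
        = κp C₀ (n + 1)
            ≫ F.map ((f, chmap F bot f n ≫ κ D₀ n) : (C₀, pob (cur F C₀) bot n) ⟶ (D₀, A D₀)) := by
      intro n
      erw [Category.assoc]
      congr 1
      show F.map ((𝟙 C₀, κ C₀ n) : (C₀, pob (cur F C₀) bot n) ⟶ (C₀, A C₀))
          ≫ F.map ((f, dmap f) : (C₀, A C₀) ⟶ (D₀, A D₀))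
        = F.map ((f, chmap F bot f n ≫ κ D₀ n) : (C₀, pob (cur F C₀) bot n) ⟶ (D₀, A D₀))
      rw [← F.map_comp]
      congr 1
      simp only [prod_comp, Category.id_comp]
      rw [hkey n]
    have hmt : Monotone fun n => κp C₀ (n + 1)
        ≫ F.map ((f, chmap F bot f n ≫ κ D₀ n) : (C₀, pob (cur F C₀) bot n) ⟶ (D₀, A D₀)) := by
      intro a b h
      dsimp only
      rw [← hb a, ← hb b]
      exact OCat.comp_mono (huC h) le_rfl
    have ha : ∀ n, (κp C₀ (n + 1) ≫ chmap F bot f (n + 1) ≫ κ D₀ (n + 1))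
          ≫ (κp D₀ (n + 1) ≫ (cur F D₀).map (κ D₀ n))
        = κp C₀ (n + 1)
            ≫ F.map ((f, chmap F bot f n ≫ κ D₀ n) : (C₀, pob (cur F C₀) bot n) ⟶ (D₀, A D₀)) := by
      intro n
      erw [Category.assoc, Category.assoc, ← Category.assoc (κ D₀ (n + 1)), hκ₁ D₀ (n + 1),
        Category.id_comp]
      congr 1
      show F.map ((f, chmap F bot f n) :
            (C₀, pob (cur F C₀) bot n) ⟶ (D₀, pob (cur F D₀) bot n))
          ≫ F.map ((𝟙 D₀, κ D₀ n) : (D₀, pob (cur F D₀) bot n) ⟶ (D₀, A D₀))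
        = F.map ((f, chmap F bot f n ≫ κ D₀ n) : (C₀, pob (cur F C₀) bot n) ⟶ (D₀, A D₀))
      rw [← F.map_comp]
      congr 1
      simp only [prod_comp, Category.comp_id]
    -- assemble
    have hmdiag : Monotone fun n => (κp C₀ (n + 1) ≫ chmap F bot f (n + 1) ≫ κ D₀ (n + 1))
        ≫ (κp D₀ (n + 1) ≫ (cur F D₀).map (κ D₀ n)) := by
      intro a b h
      dsimp only
      rw [ha a, ha b]
      exact hmt h
    have hbmono : Monotone fun n => (κp C₀ (n + 1) ≫ (cur F C₀).map (κ C₀ n))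
        ≫ F.map ((f, dmap f) : _ ⟶ (D₀, _)) := by
      intro a b h
      dsimp only
      rw [hb a, hb b]
      exact hmt h
    calc dmap f ≫ ωSup ⟨fun n => κp D₀ (n + 1) ≫ (cur F D₀).map (κ D₀ n), huD⟩
        = ωSup ⟨fun n => κp C₀ n ≫ chmap F bot f n ≫ κ D₀ n, hmc⟩
            ≫ ωSup ⟨fun n => κp D₀ (n + 1) ≫ (cur F D₀).map (κ D₀ n), huD⟩ := by
          rw [hdmap f hmc]
      _ = ωSup ⟨fun n => κp C₀ (n + 1) ≫ chmap F bot f (n + 1) ≫ κ D₀ (n + 1),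
            chain_shift_mono ⟨fun n => κp C₀ n ≫ chmap F bot f n ≫ κ D₀ n, hmc⟩⟩
            ≫ ωSup ⟨fun n => κp D₀ (n + 1) ≫ (cur F D₀).map (κ D₀ n), huD⟩ :=
          congrArg (fun x => x ≫ ωSup ⟨fun n => κp D₀ (n + 1) ≫ (cur F D₀).map (κ D₀ n), huD⟩)
            (ωSup_shift ⟨fun n => κp C₀ n ≫ chmap F bot f n ≫ κ D₀ n, hmc⟩)
      _ = ωSup ⟨fun n => (κp C₀ (n + 1) ≫ chmap F bot f (n + 1) ≫ κ D₀ (n + 1))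
            ≫ (κp D₀ (n + 1) ≫ (cur F D₀).map (κ D₀ n)), hmdiag⟩ := ωSup_comp _ _ hmdiag
      _ = (ωSup ⟨fun n => κp C₀ (n + 1)
            ≫ F.map ((f, chmap F bot f n ≫ κ D₀ n) : (C₀, pob (cur F C₀) bot n) ⟶ (D₀, A D₀)),
            hmt⟩ : A C₀ ⟶ (cur F D₀).obj (A D₀)) := chain_congr ha
      _ = (ωSup ⟨fun n => (κp C₀ (n + 1) ≫ (cur F C₀).map (κ C₀ n))
            ≫ F.map ((f, dmap f) : _ ⟶ (D₀, _)), hbmono⟩ : A C₀ ⟶ (cur F D₀).obj (A D₀)) := (chain_congr hb).symm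
      _ = (ωSup ⟨fun n => κp C₀ (n + 1) ≫ (cur F C₀).map (κ C₀ n), huC⟩
            ≫ F.map ((f, dmap f) : _ ⟶ (D₀, _)) : A C₀ ⟶ (cur F D₀).obj (A D₀)) :=
          (OCat.comp_cont_left _ ⟨fun n => κp C₀ (n + 1) ≫ (cur F C₀).map (κ C₀ n), huC⟩
            hbmono).symm
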